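/- Let f: ℝ^D → [0,∞) be a density with bounded support and ‖f‖_∞ < ∞, inducing a probability measure P. For x ∈ ℝ^D define F_x(r) = P(f(X)^{1/D} · d(X, x) ≤ r) and let F_x^{−1}(m) = inf{t : F_x(t) ≥ m}. Then for fixed m ∈ (0,1), the map x ↦ F_x^{−1}(m) is Lipschitz on ℝ^D with Lipschitz constant at most ‖f‖_∞^{1/D}. -/
import Mathlib


open MeasureTheory Set

/-- `F_x(r) = P(f(X)^{1/D} d(X,x) ≤ r)` for `P` the measure with density `f`. -/
noncomputable def Fcdf {D : ℕ} (f : EuclideanSpace ℝ (Fin D) → ℝ)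
    (x : EuclideanSpace ℝ (Fin D)) (r : ℝ) : ℝ :=
  ((volume.withDensity fun ξ => ENNReal.ofReal (f ξ))
    {ξ | f ξ ^ ((1 : ℝ) / D) * dist ξ x ≤ r}).toReal

/-- Generalized inverse `F_x^{-1}(m) = inf {t : F_x(t) ≥ m}`. -/
noncomputable def Fquantile {D : ℕ} (f : EuclideanSpace ℝ (Fin D) → ℝ)
    (x : EuclideanSpace ℝ (Fin D)) (m : ℝ) : ℝ :=
  sInf {t : ℝ | m ≤ Fcdf f x t}

/-- For a bounded density `f` with bounded support, `x ↦ F_x^{-1}(m)` is Lipschitz with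
constant `‖f‖_∞^{1/D}`. -/
theorem quantile_lipschitz {D : ℕ} (hD : 0 < D)
    (f : EuclideanSpace ℝ (Fin D) → ℝ) (hf : Measurable f) (hf0 : ∀ ξ, 0 ≤ f ξ)
    (hsupp : Bornology.IsBounded (Function.support f))
    (hbdd : BddAbove (Set.range f))
    (hprob : IsProbabilityMeasure (volume.withDensity fun ξ => ENNReal.ofReal (f ξ)))
    (m : ℝ) (hm : m ∈ Set.Ioo (0 : ℝ) 1) :
    ∀ x y : EuclideanSpace ℝ (Fin D),
      |Fquantile f x m - Fquantile f y m| ≤ (sSup (Set.range f)) ^ ((1 : ℝ) / D) * dist x y := by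
  obtain ⟨hm0, hm1⟩ := hm
  haveI := hprob
  set M := sSup (Set.range f) with hM
  have hM0 : 0 ≤ M := (hf0 0).trans (le_csSup hbdd ⟨0, rfl⟩)
  set M' := M ^ ((1 : ℝ) / D) with hM'
  have hM'0 : 0 ≤ M' := Real.rpow_nonneg hM0 _
  have hfle : ∀ ξ, f ξ ^ ((1 : ℝ) / D) ≤ M' :=
    fun ξ => Real.rpow_le_rpow (hf0 ξ) (le_csSup hbdd ⟨ξ, rfl⟩) (by positivity)
  have hf'0 : ∀ ξ, 0 ≤ f ξ ^ ((1 : ℝ) / D) := fun ξ => Real.rpow_nonneg (hf0 ξ) _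
  have key : ∀ x y t, Fcdf f y t ≤ Fcdf f x (t + M' * dist x y) := by
    intro x y t
    apply ENNReal.toReal_mono (measure_ne_top _ _)
    apply measure_mono
    intro ξ hξ
    simp only [Set.mem_setOf_eq] at hξ ⊢
    have h1 : dist ξ x ≤ dist ξ y + dist y x := dist_triangle ξ y x
    have h2 : f ξ ^ ((1 : ℝ) / D) * dist ξ x ≤
        f ξ ^ ((1 : ℝ) / D) * dist ξ y + f ξ ^ ((1 : ℝ) / D) * dist y x := by
      nlinarith [hf'0 ξ]
    have h3 : f ξ ^ ((1 : ℝ) / D) * dist y x ≤ M' * dist x y := by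
      rw [dist_comm y x]; exact mul_le_mul_of_nonneg_right (hfle ξ) dist_nonneg
    linarith
  have hSne : ∀ x, {t : ℝ | m ≤ Fcdf f x t}.Nonempty := by
    intro x
    obtain ⟨r, hr⟩ := hsupp.subset_closedBall x
    refine ⟨M' * max r 0, ?_⟩
    have huniv : {ξ | f ξ ^ ((1 : ℝ) / D) * dist ξ x ≤ M' * max r 0} = Set.univ := by
      ext ξ
      simp only [Set.mem_setOf_eq, Set.mem_univ, iff_true]
      by_cases h : f ξ = 0
      · rw [h, Real.zero_rpow (by positivity), zero_mul]; positivity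
      · have hmem : ξ ∈ Function.support f := h
        have hdb := hr hmem
        rw [Metric.mem_closedBall] at hdb
        exact mul_le_mul (hfle ξ) (hdb.trans (le_max_left _ _)) dist_nonneg hM'0
    simp only [Set.mem_setOf_eq, Fcdf, huniv]
    rw [measure_univ, ENNReal.toReal_one]
    exact hm1.le
  have hSbdd : ∀ x, ∀ t ∈ {t : ℝ | m ≤ Fcdf f x t}, (0 : ℝ) ≤ t := by
    intro x t ht
    by_contra hneg
    push_neg at hneg
    have hempty : {ξ | f ξ ^ ((1 : ℝ) / D) * dist ξ x ≤ t} = ∅ := by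
      ext ξ
      simp only [Set.mem_setOf_eq, Set.mem_empty_iff_false, iff_false, not_le]
      calc t < 0 := hneg
        _ ≤ f ξ ^ ((1 : ℝ) / D) * dist ξ x := mul_nonneg (hf'0 ξ) dist_nonneg
    have : Fcdf f x t = 0 := by
      simp only [Fcdf, hempty, measure_empty, ENNReal.toReal_zero]
    simp only [Set.mem_setOf_eq, this] at ht
    linarith
  have main : ∀ x y, Fquantile f x m ≤ Fquantile f y m + M' * dist x y := by
    intro x y
    have h : Fquantile f x m - M' * dist x y ≤ Fquantile f y m := by
      apply le_csInf (hSne y)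
      intro t ht
      have htc : t + M' * dist x y ∈ {t : ℝ | m ≤ Fcdf f x t} :=
        le_trans ht (key x y t)
      have := csInf_le ⟨0, fun s hs => hSbdd x s hs⟩ htc
      simp only [Fquantile]
      linarith
    linarith
  intro x y
  rw [abs_sub_le_iff]
  have h1 := main x y
  have h2 := main y x
  rw [dist_comm y x] at h2
  constructor <;> linarith
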